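/- Let (eₙ) be a 2-asymptotically unconditional bimonotone basis, meaning that for any N, any normalized block sequence N < x₁ < ⋯ < x_N, scalars a₁,…,a_N, and signs ε₁,…,ε_N, one has ‖∑ₙ εₙ aₙ xₙ‖ ≤ 2‖∑ₙ aₙ xₙ‖. Let y* be a norm-one functional and let E be a union of m intervals with 2m−1 < min supp(E y*) (i.e., the restriction of y* to E is supported after 2m−1). Then ‖E y*‖ ≤ 2, where E y* denotes the restriction of y* to the coordinates in E. More generally, projections onto unions of m intervals supported after 2m−1 have norm at most 2 on the dual. -/

import Mathlib

open scoped BigOperators Classical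

noncomputable section

section Prelude

variable {X : Type*} [NormedAddCommGroup X] [NormedSpace ℝ X]

/-- The vector with finitely supported coefficients `c` with respect to the sequence `e`. -/
def vecOf (e : ℕ → X) (c : ℕ →₀ ℝ) : X := c.sum fun n a => a • e n

/-- `c < d` : the supports of `c` and `d` are successive. -/
def FsuppLt (c d : ℕ →₀ ℝ) : Prop := ∀ a ∈ c.support, ∀ b ∈ d.support, a < b

/-- The Gowers–Maurey function `f(n) = log₂(n+1)`. -/
def flog (n : ℕ) : ℝ := Real.logb 2 ((n : ℝ) + 1)

/-- Support of a functional with respect to the basis `e` (via biorthogonal functionals). -/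
def fsupp (e : ℕ → X) (f : X →L[ℝ] ℝ) : Set ℕ := {n | f (e n) ≠ 0}

/-- Bimonotonicity of the basis `e`, expressed on finitely supported vectors:
projections onto intervals are contractive. -/
def Bimonotone (e : ℕ → X) : Prop :=
  ∀ (c : ℕ →₀ ℝ) (a b : ℕ), ‖vecOf e (c.filter fun n => n ∈ Finset.Icc a b)‖ ≤ ‖vecOf e c‖

/-- Lower `f`-estimate for a general function `f`. -/
def LowerEst (e : ℕ → X) (f : ℝ → ℝ) : Prop :=
  ∀ (n : ℕ) (c : Fin n → ℕ →₀ ℝ), (∀ i j : Fin n, i < j → FsuppLt (c i) (c j)) →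
    (1 / f (n : ℝ)) * ∑ i, ‖vecOf e (c i)‖ ≤ ‖∑ i, vecOf e (c i)‖

/-- Lower `f`-estimate with `f(n) = log₂(n+1)`. -/
def LowerFEst (e : ℕ → X) : Prop :=
  ∀ (n : ℕ) (c : Fin n → ℕ →₀ ℝ), (∀ i j : Fin n, i < j → FsuppLt (c i) (c j)) →
    (1 / flog n) * ∑ i, ‖vecOf e (c i)‖ ≤ ‖∑ i, vecOf e (c i)‖

/-- `Y` embeds isomorphically into `Z` (linear isomorphism onto its image). -/
def Embeds (Y Z : Type*) [NormedAddCommGroup Y] [NormedSpace ℝ Y]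
    [NormedAddCommGroup Z] [NormedSpace ℝ Z] : Prop :=
  ∃ T : Y →L[ℝ] Z, ∃ c : ℝ, 0 < c ∧ ∀ y, c * ‖y‖ ≤ ‖T y‖

/-- `Y` embeds into `Z` with constant `K` (i.e. `‖T‖ ⬝ ‖T⁻¹‖ ≤ K` after normalisation). -/
def EmbedsWithConst (K : ℝ) (Y Z : Type*) [NormedAddCommGroup Y] [NormedSpace ℝ Y]
    [NormedAddCommGroup Z] [NormedSpace ℝ Z] : Prop :=
  ∃ T : Y →L[ℝ] Z, ∀ y, ‖y‖ ≤ ‖T y‖ ∧ ‖T y‖ ≤ K * ‖y‖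

/-- The closed span `[eₙ : n ∉ S]`. -/
def spanCompl (e : ℕ → X) (S : Set ℕ) : Submodule ℝ X :=
  (Submodule.span ℝ (e '' Sᶜ)).topologicalClosure

/-- `Y` is tight in the basic sequence `e`. -/
def TightIn (e : ℕ → X) (Y : Type*) [NormedAddCommGroup Y] [NormedSpace ℝ Y] : Prop :=
  ∃ I : ℕ → Finset ℕ, (∀ i j : ℕ, i < j → ∀ a ∈ I i, ∀ b ∈ I j, a < b) ∧
    ∀ A : Set ℕ, A.Infinite → ¬ Embeds Y ↥(spanCompl e (⋃ i ∈ A, (I i : Set ℕ)))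

/-- The basis `e` is tight: every infinite-dimensional Banach space is tight in it. -/
def TightBasis (e : ℕ → X) : Prop :=
  ∀ (Y : Type) [NormedAddCommGroup Y] [NormedSpace ℝ Y] [CompleteSpace Y],
    ¬ FiniteDimensional ℝ Y → TightIn e Y

end Prelude


section Stmt14Aux
namespace Stmt14Aux

variable {X : Type*} [NormedAddCommGroup X] [NormedSpace ℝ X]

/-! ### Run decomposition of a list along a boolean predicate -/

def runsL (P : ℕ → Bool) : List ℕ → List (List ℕ)
  | [] => []
  | k :: ks =>
    match runsL P ks with
    | [] => [[k]]
    | R :: rs => if P k = P R.headI then (k :: R) :: rs else [k] :: R :: rs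

theorem runsL_flatten (P : ℕ → Bool) : ∀ l : List ℕ, (runsL P l).flatten = l
  | [] => rfl
  | k :: ks => by
    have ih := runsL_flatten P ks
    unfold runsL
    rcases h : runsL P ks with _ | ⟨R, rs⟩
    · rw [h] at ih; simp at ih; simp [ih]
    · rw [h] at ih; simp at ih
      by_cases hp : P k = P R.headI <;> simp [hp, ih]

theorem runsL_ne_nil (P : ℕ → Bool) : ∀ l : List ℕ, ∀ R ∈ runsL P l, R ≠ []
  | [] => by simp [runsL]
  | k :: ks => by
    have ih := runsL_ne_nil P ks
    unfold runsL
    rcases h : runsL P ks with _ | ⟨R, rs⟩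
    · simp
    · have ih' := fun R' hR' => ih R' (h ▸ hR')
      by_cases hp : P k = P R.headI <;> simp only [hp, if_true, if_false] <;>
        intro R' hR' <;> rcases List.mem_cons.1 hR' with rfl | hR'
      · simp
      · exact ih' R' (by simp [hR'])
      · simp
      · rcases List.mem_cons.1 hR' with rfl | hR'
        · exact ih' R' (by simp)
        · exact ih' R' (by simp [hR'])

theorem runsL_const (P : ℕ → Bool) : ∀ l : List ℕ, ∀ R ∈ runsL P l, ∀ x ∈ R, P x = P R.headI
  | [] => by simp [runsL]
  | k :: ks => by
    have ih := runsL_const P ks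
    unfold runsL
    rcases h : runsL P ks with _ | ⟨R, rs⟩
    · simp
    · have ih' := fun R' hR' => ih R' (h ▸ hR')
      by_cases hp : P k = P R.headI <;> simp only [hp, if_true, if_false, List.mem_cons] <;>
        rintro R' (rfl | hR') x hx
      · rcases List.mem_cons.1 hx with rfl | hx
        · simp
        · simp only [List.headI]
          rw [ih' R (by simp) x hx, hp]
      · exact ih' R' (by simp [hR']) x hx
      · rcases List.mem_cons.1 hx with rfl | hx
        · simp
        · simp at hx
      · rcases hR' with rfl | hR'
        · exact ih' R' (by simp) x hx
        · exact ih' R' (by simp [hR']) x hx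

theorem runsL_chain (P : ℕ → Bool) : ∀ l : List ℕ,
    List.Chain' (fun R R' => P R.headI ≠ P R'.headI) (runsL P l)
  | [] => by simp [runsL, List.Chain']
  | k :: ks => by
    have ih := runsL_chain P ks
    unfold runsL
    rcases h : runsL P ks with _ | ⟨R, rs⟩
    · simp [List.Chain']
    · rw [h] at ih
      by_cases hp : P k = P R.headI <;> simp only [hp, if_true, if_false]
      · rcases rs with _ | ⟨R', rs'⟩
        · simp [List.Chain']
        · refine List.isChain_cons_cons.2 ⟨?_, (List.isChain_cons_cons.1 ih).2⟩
          simpa [hp] using (List.isChain_cons_cons.1 ih).1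
      · exact List.isChain_cons_cons.2 ⟨hp, ih⟩

theorem runsL_headI (P : ℕ → Bool) (k : ℕ) (ks : List ℕ) :
    (runsL P (k :: ks)).headI.headI = k := by
  unfold runsL
  rcases h : runsL P ks with _ | ⟨R, rs⟩
  · simp
  · by_cases hp : P k = P R.headI <;> simp [hp]

theorem runsL_eq_nil (P : ℕ → Bool) {l : List ℕ} (h : runsL P l = []) : l = [] := by
  have := runsL_flatten P l
  rw [h] at this; simpa using this.symm

theorem runsL_getLast? (P : ℕ → Bool) :
    ∀ l : List ℕ, ((runsL P l).getLast?.getD []).getLast? = l.getLast?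
  | [] => rfl
  | k :: ks => by
    have ih := runsL_getLast? P ks
    unfold runsL
    rcases h : runsL P ks with _ | ⟨R, rs⟩
    · have : ks = [] := runsL_eq_nil P h
      subst this; simp
    · have hks : ks ≠ [] := by
        intro hk; subst hk; simp [runsL] at h
      have hR : R ≠ [] := runsL_ne_nil P ks R (h ▸ List.mem_cons_self)
      rw [h] at ih
      rcases rs with _ | ⟨R', rs'⟩
      · simp only [List.getLast?_singleton, Option.getD_some] at ih
        have h1 : (k :: R).getLast? = R.getLast? := by
          rcases R with _ | ⟨r, R0⟩
          · exact absurd rfl hR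
          · exact List.getLast?_cons_cons ..
        have h2 : (k :: ks).getLast? = ks.getLast? := by
          rcases ks with _ | ⟨r, ks0⟩
          · exact absurd rfl hks
          · exact List.getLast?_cons_cons ..
        by_cases hp : P k = P R.headI <;> simp only [hp, if_true, if_false] <;>
          simp [h1, h2, ih]
      · have h2 : (k :: ks).getLast? = ks.getLast? := by
          rcases ks with _ | ⟨r, ks0⟩
          · exact absurd rfl hks
          · exact List.getLast?_cons_cons ..
        by_cases hp : P k = P R.headI <;> simp only [hp, if_true, if_false] <;>
          simpa [List.getLast?_cons_cons, h2] using ih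

theorem runsL_headI' (P : ℕ → Bool) {l : List ℕ} (hl : l ≠ []) :
    (runsL P l).headI.headI = l.headI := by
  cases l with
  | nil => exact absurd rfl hl
  | cons k ks => exact runsL_headI P k ks

theorem get_zero_eq_headI {L : List (List ℕ)} (h : 0 < L.length) :
    L.get ⟨0, h⟩ = L.headI := by
  cases L with
  | nil => simp at h
  | cons a t => rfl

theorem headI_mem {l : List ℕ} (h : l ≠ []) : l.headI ∈ l := by
  cases l with
  | nil => exact absurd rfl h
  | cons a t => exact List.mem_cons_self

theorem headI_le_mem {l : List ℕ} (hs : l.Pairwise (· < ·)) {x : ℕ} (hx : x ∈ l) :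
    l.headI ≤ x := by
  cases l with
  | nil => simp at hx
  | cons a t =>
    rcases List.mem_cons.1 hx with rfl | hx
    · exact le_refl _
    · exact le_of_lt ((List.pairwise_cons.1 hs).1 x hx)

theorem mem_le_getLast : ∀ {l : List ℕ}, l.Pairwise (· < ·) → ∀ (hl : l ≠ []) {x : ℕ},
    x ∈ l → x ≤ l.getLast hl
  | [], _, hl, _, _ => absurd rfl hl
  | [a], _, hl, x, hx => by
    simp at hx; simp [hx, List.getLast]
  | a :: b :: t, hs, hl, x, hx => by
    rw [List.getLast_cons (by simp : b :: t ≠ [])]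
    rcases List.mem_cons.1 hx with rfl | hx
    · exact le_of_lt ((List.pairwise_cons.1 hs).1 _ (List.getLast_mem (by simp)))
    · exact mem_le_getLast (List.pairwise_cons.1 hs).2 (by simp) hx

theorem card_evens (t : ℕ) :
    ((Finset.range t).filter (fun j => j % 2 = 0)).card = (t + 1) / 2 := by
  induction t with
  | zero => simp
  | succ n ih =>
    rw [Finset.range_add_one, Finset.filter_insert]
    by_cases h : n % 2 = 0
    · rw [if_pos h, Finset.card_insert_of_notMem (by simp), ih]; omega
    · rw [if_neg h, ih]; omega

theorem runs_length_le (m : ℕ) (a b : Fin m → ℕ) (E : Set ℕ)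
    (hE : E = ⋃ i, Set.Icc (a i) (b i)) (l : List ℕ) (hl : l ≠ [])
    (hsort : l.Pairwise (· < ·))
    (hhead : l.headI ∈ E) (hlast : l.getLast hl ∈ E) :
    (runsL (fun k => decide (k ∈ E)) l).length ≤ 2 * m - 1 := by
  obtain ⟨P, hP⟩ : ∃ P : ℕ → Bool, P = fun k => decide (k ∈ E) := ⟨_, rfl⟩
  rw [← hP]
  have hne : ∀ R ∈ runsL P l, R ≠ [] := runsL_ne_nil P l
  have hconst := runsL_const P l
  have hchain := runsL_chain P l
  have hflat := runsL_flatten P l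
  have hglast := runsL_getLast? P l
  have hhead' : (runsL P l).headI.headI = l.headI := runsL_headI' P hl
  obtain ⟨rs, hrs⟩ : ∃ rs, runsL P l = rs := ⟨_, rfl⟩
  rw [hrs] at hne hconst hchain hflat hglast hhead' ⊢
  set t := rs.length with ht
  have htpos : 0 < t := by
    rcases h : rs with _ | _
    · rw [h] at hflat; simp at hflat; exact absurd hflat hl
    · simp [ht, h]
  have hβstep : ∀ j : ℕ, ∀ h : j + 1 < t,
      P (rs.get ⟨j + 1, h⟩).headI = !P (rs.get ⟨j, by omega⟩).headI := by
    intro j h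
    have : P (rs.get ⟨j, by omega⟩).headI ≠ P (rs.get ⟨j+1, h⟩).headI :=
      (List.isChain_iff_getElem.1 hchain) j (by omega)
    revert this
    cases (P (rs.get ⟨j, by omega⟩).headI) <;> cases (P (rs.get ⟨j+1, h⟩).headI) <;> simp
  have hβ0 : P (rs.get ⟨0, htpos⟩).headI = true := by
    rw [get_zero_eq_headI, hhead']
    simp only [hP, decide_eq_true_eq]
    exact hhead
  have hβ : ∀ j : ℕ, ∀ h : j < t, P (rs.get ⟨j, h⟩).headI = decide (j % 2 = 0) := by
    intro j
    induction j with
    | zero => intro h; simpa using hβ0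
    | succ n ih =>
      intro h
      rw [hβstep n h, ih (by omega)]
      rcases Nat.even_or_odd n with he | ho
      · have h1 : n % 2 = 0 := Nat.even_iff.1 he
        have h2 : ¬ ((n+1) % 2 = 0) := by omega
        simp [h1, h2]
      · have h1 : ¬ (n % 2 = 0) := by have := Nat.odd_iff.1 ho; omega
        have h2 : (n+1) % 2 = 0 := by have := Nat.odd_iff.1 ho; omega
        simp [h1, h2]
  have hlast' : Even (t - 1) := by
    have hne0 : rs ≠ [] := by intro h; rw [h] at ht; simp [ht] at htpos
    have hgl : rs.getLast? = some (rs.getLast hne0) := List.getLast?_eq_getLast_of_ne_nil hne0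
    have hR : rs.getLast hne0 ∈ rs := List.getLast_mem hne0
    have hRne : rs.getLast hne0 ≠ [] := hne _ hR
    have hkey := hglast
    rw [hgl] at hkey
    simp only [Option.getD_some] at hkey
    rw [List.getLast?_eq_getLast_of_ne_nil hl, List.getLast?_eq_getLast_of_ne_nil hRne] at hkey
    have hxE : (rs.getLast hne0).getLast hRne ∈ E := by
      rw [Option.some_inj] at hkey; rw [hkey]; exact hlast
    have hx : P ((rs.getLast hne0).getLast hRne) = P (rs.getLast hne0).headI :=
      hconst _ hR _ (List.getLast_mem hRne)
    have hgetL : rs.getLast hne0 = rs.get ⟨t - 1, by omega⟩ := by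
      exact List.getLast_eq_getElem _
    have : P (rs.get ⟨t - 1, by omega⟩).headI = true := by
      rw [← hgetL, ← hx, hP]; simpa using hxE
    rw [hβ (t-1) (by omega)] at this
    simp at this
    exact Nat.even_iff.2 this
  have hord : ∀ i j : Fin t, i < j → ∀ x ∈ rs.get i, ∀ y ∈ rs.get j, x < y := by
    have hp : rs.Pairwise (fun R R' => ∀ x ∈ R, ∀ y ∈ R', x < y) := by
      have := hsort
      rw [← hflat, List.pairwise_flatten] at this
      exact this.2
    intro i j hij
    exact List.pairwise_iff_get.1 hp i j hij
  have hchoice : ∀ j : Fin t, j.val % 2 = 0 → ∃ i : Fin m,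
      a i ≤ (rs.get j).headI ∧ (rs.get j).headI ≤ b i := by
    intro j hj
    have h1 : P (rs.get j).headI = true := by
      have := hβ j.val j.isLt
      simp only [Fin.eta] at this
      rw [this]; simpa using hj
    have : (rs.get j).headI ∈ E := by simpa [hP] using h1
    rw [hE] at this
    rcases Set.mem_iUnion.1 this with ⟨i, hi⟩
    exact ⟨i, hi.1, hi.2⟩
  have hm : 0 < m := by
    rcases Nat.eq_zero_or_pos m with rfl | h
    · exfalso; rw [hE] at hhead; simpa using hhead
    · exact h
  obtain ⟨φ, hφspec⟩ : ∃ φ : ℕ → Fin m, ∀ j : ℕ, ∀ h : j < t, j % 2 = 0 →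
      a (φ j) ≤ (rs.get ⟨j, h⟩).headI ∧ (rs.get ⟨j, h⟩).headI ≤ b (φ j) := by
    have hchoice' : ∀ j : ℕ, ∃ i : Fin m, ∀ h : j < t, j % 2 = 0 →
        a i ≤ (rs.get ⟨j, h⟩).headI ∧ (rs.get ⟨j, h⟩).headI ≤ b i := by
      intro j
      by_cases hc : ∃ h : j < t, j % 2 = 0
      · obtain ⟨h1, h2⟩ := hc
        obtain ⟨i, hi⟩ := hchoice ⟨j, h1⟩ h2
        exact ⟨i, fun h _ => hi⟩
      · exact ⟨⟨0, hm⟩, fun h1 h2 => absurd ⟨h1, h2⟩ hc⟩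
    exact ⟨fun j => Classical.choose (hchoice' j), fun j => Classical.choose_spec (hchoice' j)⟩
  have key : ∀ j j' : ℕ, j < j' → ∀ hjt : j < t, j % 2 = 0 → ∀ hj't : j' < t, j' % 2 = 0 →
      φ j ≠ φ j' := by
    intro j j' hlt hjt hj2 hj't hj'2 hφ
    have e1 := hφspec j hjt hj2
    have e2 := hφspec j' hj't hj'2
    rw [← hφ] at e2
    set i := φ j with hi
    have hj1lt : j + 1 < t := by omega
    have hmid : j + 1 < j' := by omega
    set k := (rs.get ⟨j+1, hj1lt⟩).headI with hk
    have hkmem : k ∈ rs.get ⟨j+1, hj1lt⟩ :=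
      headI_mem (hne _ (List.get_mem rs _))
    have hk1 : (rs.get ⟨j, hjt⟩).headI < k :=
      hord ⟨j, hjt⟩ ⟨j+1, hj1lt⟩ (by simp [Fin.lt_def])
        _ (headI_mem (hne _ (List.get_mem rs _))) _ hkmem
    have hk2 : k < (rs.get ⟨j', hj't⟩).headI :=
      hord ⟨j+1, hj1lt⟩ ⟨j', hj't⟩ (by simp [Fin.lt_def]; omega)
        _ hkmem _ (headI_mem (hne _ (List.get_mem rs _)))
    have hkE : k ∈ E := by
      rw [hE]
      refine Set.mem_iUnion.2 ⟨i, ?_⟩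
      constructor
      · exact le_of_lt (lt_of_le_of_lt e1.1 hk1)
      · exact le_of_lt (lt_of_lt_of_le hk2 e2.2)
    have hfalse : P k = decide ((j+1) % 2 = 0) := hβ (j+1) hj1lt
    rw [hP] at hfalse
    simp only [decide_eq_true_eq] at hfalse
    have h2 : ¬ ((j+1) % 2 = 0) := by omega
    simp [hkE, h2] at hfalse
  have hinj : Set.InjOn φ ((Finset.range t).filter (fun j => j % 2 = 0)) := by
    intro j hj j' hj' hφ
    simp only [Finset.coe_filter, Set.mem_setOf_eq, Finset.mem_range] at hj hj'
    rcases lt_trichotomy j j' with h | h | h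
    · exact absurd hφ (key j j' h hj.1 hj.2 hj'.1 hj'.2)
    · exact h
    · exact absurd hφ.symm (key j' j h hj'.1 hj'.2 hj.1 hj.2)
  have hcard := Finset.card_le_card_of_injOn φ (fun x _ => Finset.mem_univ (φ x)) hinj
  rw [card_evens] at hcard
  simp only [Finset.card_univ, Fintype.card_fin] at hcard
  have hodd := Nat.even_iff.1 hlast'
  omega

/-! ### List and Finsupp sum lemmas -/

theorem sum_if_mem (x : ℝ) (k : ℕ) : ∀ rs : List (List ℕ), (rs.flatten).Nodup →
    (rs.map fun R => if k ∈ R then x else 0).sum = if k ∈ rs.flatten then x else 0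
  | [], _ => by simp
  | R :: rs, h => by
    rw [List.flatten_cons, List.nodup_append] at h
    obtain ⟨h1, h2, h3⟩ := h
    rw [List.map_cons, List.sum_cons, sum_if_mem x k rs h2]
    by_cases hk : k ∈ R
    · have hk2 : k ∉ rs.flatten := fun hc => h3 k hk k hc rfl
      simp [hk, hk2]
    · simp [hk]

omit [NormedSpace ℝ X] in
theorem list_sum_add {α : Type*} (f g : α → X) (L : List α) :
    (L.map fun y => f y + g y).sum = (L.map f).sum + (L.map g).sum := by
  induction L with
  | nil => simp
  | cons y L ih => simp [ih]; abel

theorem list_sum_smul {α : Type*} (r : ℝ) (g : α → X) (L : List α) :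
    (L.map fun y => r • g y).sum = r • (L.map g).sum := by
  induction L with
  | nil => simp
  | cons y L ih => simp [ih, smul_add]

omit [NormedSpace ℝ X] in
theorem sum_map_filter_of_zero {α : Type*} (g : α → X) (q : α → Bool)
    (hg : ∀ y, q y = false → g y = 0) :
    ∀ L : List α, ((L.filter q).map g).sum = (L.map g).sum := by
  intro L
  induction L with
  | nil => simp
  | cons y L ih =>
    rcases h : q y with _ | _
    · rw [List.filter_cons_of_neg (by simp [h])]
      simp [ih, hg y h]
    · rw [List.filter_cons_of_pos (by simp [h])]
      simp [ih]

omit [NormedSpace ℝ X] in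
theorem sum_map_eq_fin {α : Type*} (g : α → X) (L : List α) :
    (L.map g).sum = ∑ i : Fin L.length, g (L.get i) := by
  conv_lhs => rw [← List.ofFn_get L, List.map_ofFn]
  rw [List.sum_ofFn]
  rfl

theorem vecOf_eq (e : ℕ → X) (c : ℕ →₀ ℝ) :
    vecOf e c = Finsupp.linearCombination ℝ e c :=
  (Finsupp.linearCombination_apply ℝ c).symm

theorem vecOf_zero (e : ℕ → X) : vecOf e 0 = 0 := by
  rw [vecOf_eq]; simp

theorem vecOf_smul (e : ℕ → X) (r : ℝ) (c : ℕ →₀ ℝ) :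
    vecOf e (r • c) = r • vecOf e c := by
  rw [vecOf_eq, vecOf_eq, map_smul]

theorem vecOf_listSum (e : ℕ → X) (L : List (ℕ →₀ ℝ)) :
    vecOf e L.sum = (L.map (vecOf e)).sum := by
  simp only [vecOf_eq]
  rw [map_list_sum (Finsupp.linearCombination ℝ e) L]
  exact congrArg _ (List.map_congr_left fun f _ => (vecOf_eq e f).symm)

theorem filter_decomp (c : ℕ →₀ ℝ) (rs : List (List ℕ)) (hnd : rs.flatten.Nodup)
    (hsupp : ∀ k ∈ c.support, k ∈ rs.flatten) :
    (rs.map fun R => c.filter (· ∈ R)).sum = c := by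
  ext k
  have h1 : ((rs.map fun R => c.filter (· ∈ R)).sum) k
      = (rs.map fun R => if k ∈ R then c k else 0).sum := by
    rw [← Finsupp.applyAddHom_apply, map_list_sum, List.map_map]
    refine congrArg _ (List.map_congr_left fun R _ => ?_)
    simp [Finsupp.filter_apply]
  rw [h1, sum_if_mem (c k) k rs hnd]
  by_cases hk : k ∈ rs.flatten
  · rw [if_pos hk]
  · rw [if_neg hk]
    by_contra h
    exact hk (hsupp k (Finsupp.mem_support_iff.2 fun h0 => h h0.symm))

theorem filter_listSum (p : ℕ → Prop) (L : List (ℕ →₀ ℝ)) :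
    (L.sum).filter p = (L.map fun f => f.filter p).sum :=
  map_list_sum (Finsupp.filterAddHom p) L

end Stmt14Aux
end Stmt14Aux

open Stmt14Aux

set_option maxHeartbeats 2000000 in
/-- for a bimonotone 2-asymptotically unconditional basis (here of the
dual), the restriction of a norm-one finitely supported vector to a union of `m`
intervals supported after `2m - 1` has norm at most `2`. -/
theorem stmt14 {V : Type} [NormedAddCommGroup V] [NormedSpace ℝ V]
    (d : ℕ → V) (hbm : Bimonotone d)
    (hasym : ∀ (N : ℕ) (x : Fin N → ℕ →₀ ℝ), (∀ i, ‖vecOf d (x i)‖ = 1) →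
      (∀ i, ∀ k ∈ (x i).support, N < k) →
      (∀ i j : Fin N, i < j → FsuppLt (x i) (x j)) →
      ∀ (a ε : Fin N → ℝ), (∀ i, ε i = 1 ∨ ε i = -1) →
        ‖∑ i, (ε i * a i) • vecOf d (x i)‖ ≤ 2 * ‖∑ i, a i • vecOf d (x i)‖)
    (c : ℕ →₀ ℝ) (hc : ‖vecOf d c‖ = 1)
    (m : ℕ) (hm : 0 < m) (E : Set ℕ) (a b : Fin m → ℕ)
    (hE : E = ⋃ i, Set.Icc (a i) (b i))
    (hafter : ∀ k ∈ (c.filter (· ∈ E)).support, 2 * m - 1 < k) :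
    ‖vecOf d (c.filter (· ∈ E))‖ ≤ 2 := by
  classical
  by_cases hF0 : c.filter (· ∈ E) = 0
  · rw [hF0, vecOf_zero]; norm_num
  have hFne : (c.filter (· ∈ E)).support.Nonempty := by
    rw [Finsupp.support_nonempty_iff]; exact hF0
  set F := (c.filter (· ∈ E)).support with hF
  set M := F.min' hFne with hM
  set L := F.max' hFne with hL
  have hmemF : ∀ k, k ∈ F → k ∈ E ∧ c k ≠ 0 := by
    intro k hk
    rw [hF, Finsupp.mem_support_iff, Finsupp.filter_apply] at hk
    by_cases h : k ∈ E
    · exact ⟨h, by simpa [h] using hk⟩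
    · simp [h] at hk
  have hME : M ∈ E ∧ c M ≠ 0 := hmemF M (F.min'_mem hFne)
  have hLE : L ∈ E ∧ c L ≠ 0 := hmemF L (F.max'_mem hFne)
  have hML : M ≤ L := F.min'_le L (F.max'_mem hFne)
  have hMafter : 2 * m - 1 < M := hafter M (F.min'_mem hFne)
  set c'' := c.filter (fun n => n ∈ Finset.Icc M L) with hcc
  have hbm1 : ‖vecOf d c''‖ ≤ 1 := by rw [← hc]; exact hbm c M L
  have hfe : c.filter (· ∈ E) = c''.filter (· ∈ E) := by
    ext k
    rw [hcc, Finsupp.filter_apply, Finsupp.filter_apply, Finsupp.filter_apply]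
    by_cases hkE : k ∈ E
    · rw [if_pos hkE, if_pos hkE]
      by_cases hkc : c k = 0
      · rw [hkc]; split_ifs <;> simp [hkc]
      · have hkF : k ∈ F := by
          rw [hF, Finsupp.mem_support_iff, Finsupp.filter_apply, if_pos hkE]; exact hkc
        rw [if_pos (Finset.mem_Icc.2 ⟨F.min'_le k hkF, F.le_max' k hkF⟩)]
    · rw [if_neg hkE, if_neg hkE]
  have hsupp'' : ∀ k ∈ c''.support, M ≤ k ∧ k ≤ L := by
    intro k hk
    rw [hcc, Finsupp.support_filter, Finset.mem_filter] at hk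
    exact Finset.mem_Icc.1 hk.2
  have hMmem'' : M ∈ c''.support := by
    rw [hcc, Finsupp.support_filter, Finset.mem_filter]
    exact ⟨Finsupp.mem_support_iff.2 hME.2, Finset.mem_Icc.2 ⟨le_refl M, hML⟩⟩
  have hLmem'' : L ∈ c''.support := by
    rw [hcc, Finsupp.support_filter, Finset.mem_filter]
    exact ⟨Finsupp.mem_support_iff.2 hLE.2, Finset.mem_Icc.2 ⟨hML, le_refl L⟩⟩
  set l := c''.support.sort (· ≤ ·) with hls
  have hmemlist : ∀ k, k ∈ l ↔ k ∈ c''.support := fun k => Finset.mem_sort _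
  have hlne : l ≠ [] := List.ne_nil_of_mem ((hmemlist M).2 hMmem'')
  have hsort : l.Pairwise (· < ·) := (Finset.sortedLT_sort _).pairwise
  have hheadE : l.headI ∈ E := by
    have h1 : l.headI ∈ c''.support := (hmemlist _).1 (headI_mem hlne)
    have h2 : M ≤ l.headI := (hsupp'' _ h1).1
    have h3 : l.headI ≤ M := headI_le_mem hsort ((hmemlist M).2 hMmem'')
    have h4 : l.headI = M := le_antisymm h3 h2
    rw [h4]; exact hME.1
  have hlastE : l.getLast hlne ∈ E := by
    have h1 : l.getLast hlne ∈ c''.support := (hmemlist _).1 (List.getLast_mem hlne)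
    have h2 : l.getLast hlne ≤ L := (hsupp'' _ h1).2
    have h3 : L ≤ l.getLast hlne := mem_le_getLast hsort hlne ((hmemlist L).2 hLmem'')
    have h4 : l.getLast hlne = L := le_antisymm h2 h3
    rw [h4]; exact hLE.1
  set P : ℕ → Bool := fun k => decide (k ∈ E) with hP
  set rs := runsL P l with hrs
  have hlen : rs.length ≤ 2 * m - 1 := by
    rw [hrs, hP]; exact runs_length_le m a b E hE l hlne hsort hheadE hlastE
  have hflat : rs.flatten = l := runsL_flatten P l
  have hnd : rs.flatten.Nodup := by rw [hflat, hls]; exact Finset.sort_nodup _ _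
  have hsubl : ∀ k ∈ c''.support, k ∈ rs.flatten := by
    intro k hk; rw [hflat]; exact (hmemlist k).2 hk
  have hdec : (rs.map fun R => c''.filter (· ∈ R)).sum = c'' := filter_decomp c'' rs hnd hsubl
  set u : List ℕ → V := fun R => vecOf d (c''.filter (· ∈ R)) with hu
  set σ : List ℕ → ℝ := fun R => if P R.headI = true then (1:ℝ) else -1 with hσ
  have hVsum : (rs.map u).sum = vecOf d c'' := by
    have h0 := vecOf_listSum d (rs.map fun R => c''.filter (· ∈ R))
    rw [hdec, List.map_map] at h0
    rw [hu]
    exact h0.symm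
  have hEdec : c''.filter (· ∈ E)
      = (rs.map fun R => if P R.headI = true then c''.filter (· ∈ R) else 0).sum := by
    conv_lhs => rw [← hdec]
    rw [filter_listSum, List.map_map]
    refine congrArg _ (List.map_congr_left fun R hR => ?_)
    have hconst : ∀ x ∈ R, P x = P R.headI := runsL_const P l R (by rw [← hrs]; exact hR)
    by_cases hPR : P R.headI = true
    · rw [if_pos hPR]
      ext k
      simp only [Function.comp_apply, Finsupp.filter_apply]
      by_cases hkR : k ∈ R
      · have hPk : P k = true := (hconst k hkR).trans hPR
        have hkE : k ∈ E := by
          rw [hP] at hPk; simpa using hPk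
        simp [hkR, hkE]
      · simp [hkR]
    · rw [if_neg hPR]
      ext k
      simp only [Function.comp_apply, Finsupp.filter_apply, Finsupp.coe_zero, Pi.zero_apply]
      by_cases hkR : k ∈ R
      · have hkE : k ∉ E := by
          intro h
          have hPk : P k = true := by rw [hP]; simpa using h
          exact hPR ((hconst k hkR).symm.trans hPk)
        simp [hkE]
      · simp [hkR]
  have hmain : vecOf d (c''.filter (· ∈ E))
      = (2⁻¹:ℝ) • (vecOf d c'' + (rs.map fun R => σ R • u R).sum) := by
    rw [hEdec, vecOf_listSum, List.map_map]
    have hmap : List.map (vecOf d ∘ fun R => if P R.headI = true then c''.filter (· ∈ R) else 0) rs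
        = List.map (fun R => (2⁻¹:ℝ) • (u R + σ R • u R)) rs := by
      refine List.map_congr_left fun R hR => ?_
      simp only [Function.comp_apply]
      by_cases h : P R.headI = true
      · rw [if_pos h]
        have h1 : vecOf d (c''.filter (· ∈ R)) = u R := by rw [hu]
        rw [h1, hσ]
        simp only [h, if_true, one_smul]
        rw [← two_smul ℝ (u R), smul_smul]
        norm_num
      · rw [if_neg h, vecOf_zero, hσ]
        simp only [h, if_false, neg_one_smul]
        simp
    rw [hmap, list_sum_smul, list_sum_add, hVsum]
  set ps := rs.filter (fun R => decide (u R ≠ 0)) with hps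
  have hNle : ps.length ≤ 2 * m - 1 := le_trans (List.length_filter_le _ _) hlen
  have hps_ne : ∀ R ∈ ps, u R ≠ 0 := by
    intro R hR
    have := List.of_mem_filter hR
    simpa using this
  set xv : Fin ps.length → ℕ →₀ ℝ :=
    fun i => (‖u (ps.get i)‖⁻¹) • (c''.filter (· ∈ ps.get i)) with hxv
  set av : Fin ps.length → ℝ := fun i => ‖u (ps.get i)‖ with hav
  set εv : Fin ps.length → ℝ := fun i => σ (ps.get i) with hεv
  have hne_i : ∀ i : Fin ps.length, u (ps.get i) ≠ 0 :=
    fun i => hps_ne _ (List.get_mem ps _)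
  have huR : ∀ R, u R = vecOf d (c''.filter (· ∈ R)) := fun R => by rw [hu]
  have hnorm : ∀ i, ‖vecOf d (xv i)‖ = 1 := by
    intro i
    rw [hxv]
    simp only
    rw [vecOf_smul, ← huR (ps.get i)]
    exact norm_smul_inv_norm (𝕜 := ℝ) (hne_i i)
  have hsuppx : ∀ i, ∀ k ∈ (xv i).support, ps.length < k := by
    intro i k hk
    rw [hxv] at hk
    simp only at hk
    have h1 : k ∈ (c''.filter (· ∈ ps.get i)).support := Finsupp.support_smul hk
    have h2 : k ∈ c''.support := by
      rw [Finsupp.support_filter, Finset.mem_filter] at h1; exact h1.1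
    have h3 := (hsupp'' k h2).1
    omega
  have horder : ∀ i j : Fin ps.length, i < j → FsuppLt (xv i) (xv j) := by
    have hpw : rs.Pairwise (fun R R' => ∀ x ∈ R, ∀ y ∈ R', x < y) := by
      have h0 : (rs.flatten).Pairwise (· < ·) := by rw [hflat]; exact hsort
      exact (List.pairwise_flatten.1 h0).2
    have hpw' : ps.Pairwise (fun R R' => ∀ x ∈ R, ∀ y ∈ R', x < y) :=
      hpw.sublist List.filter_sublist
    intro i j hij k hk k' hk'
    rw [hxv] at hk hk'
    simp only at hk hk'
    have h1 : k ∈ ps.get i := by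
      have h := Finsupp.support_smul hk
      rw [Finsupp.support_filter, Finset.mem_filter] at h
      exact h.2
    have h2 : k' ∈ ps.get j := by
      have h := Finsupp.support_smul hk'
      rw [Finsupp.support_filter, Finset.mem_filter] at h
      exact h.2
    exact List.pairwise_iff_get.1 hpw' i j hij k h1 k' h2
  have hεpm : ∀ i, εv i = 1 ∨ εv i = -1 := by
    intro i
    rw [hεv, hσ]
    simp only
    by_cases h : P ((ps.get i).headI) = true
    · left; rw [if_pos h]
    · right; rw [if_neg h]
  have hkey := hasym ps.length xv hnorm hsuppx horder av εv hεpm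
  have hax : ∀ i, av i • vecOf d (xv i) = u (ps.get i) := by
    intro i
    rw [hav, hxv]
    simp only
    rw [vecOf_smul, ← huR (ps.get i), smul_smul,
      mul_inv_cancel₀ (norm_ne_zero_iff.2 (hne_i i)), one_smul]
  have hax2 : ∀ i, (εv i * av i) • vecOf d (xv i) = σ (ps.get i) • u (ps.get i) := by
    intro i
    rw [mul_smul, hax i, hεv]
  have hVps : ∑ i, av i • vecOf d (xv i) = vecOf d c'' := by
    rw [Finset.sum_congr rfl (fun i _ => hax i), ← sum_map_eq_fin u ps]
    have e3 : (ps.map u).sum = (rs.map u).sum := by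
      rw [hps]
      exact sum_map_filter_of_zero u (fun R => decide (u R ≠ 0))
        (fun y hy => not_not.1 (of_decide_eq_false hy)) rs
    rw [e3]; exact hVsum
  have hWps : ∑ i, (εv i * av i) • vecOf d (xv i) = (rs.map fun R => σ R • u R).sum := by
    rw [Finset.sum_congr rfl (fun i _ => hax2 i),
      ← sum_map_eq_fin (fun R => σ R • u R) ps]
    rw [hps]
    exact sum_map_filter_of_zero (fun R => σ R • u R) (fun R => decide (u R ≠ 0))
      (fun y hy => by
        show σ y • u y = 0
        rw [not_not.1 (of_decide_eq_false hy), smul_zero]) rs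
  rw [hVps, hWps] at hkey
  have hW : ‖(rs.map fun R => σ R • u R).sum‖ ≤ 2 := by
    refine le_trans hkey ?_
    nlinarith [norm_nonneg (vecOf d c'')]
  calc ‖vecOf d (c.filter (· ∈ E))‖
      = ‖vecOf d (c''.filter (· ∈ E))‖ := by rw [hfe]
    _ = ‖(2⁻¹:ℝ) • (vecOf d c'' + (rs.map fun R => σ R • u R).sum)‖ := by rw [hmain]
    _ ≤ 2⁻¹ * (‖vecOf d c''‖ + ‖(rs.map fun R => σ R • u R).sum‖) := by
        rw [norm_smul]
        have := norm_add_le (vecOf d c'') ((rs.map fun R => σ R • u R).sum)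
        have h0 : ‖(2⁻¹:ℝ)‖ = 2⁻¹ := by norm_num
        rw [h0]
        nlinarith
    _ ≤ 2 := by nlinarith
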